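/- Suppose G is the adjacency matrix of a finite simple graph on n vertices with at least one edge, and let K be a clique of maximum size ω ≥ 2. Then the allocation σ* with σ*_i = 1/ω for i ∈ K and σ*_i = 0 otherwise satisfies (G·σ*)_i = (ω−1)/ω for every i ∈ K, and σ* maximizes P(Y*(σ)) among all σ ∈ ℝ^n with σ_i ≥ 0 and Σ_i σ_i ≤ 1. In particular, any maximum clique is the active set at an optimal allocation for the success probability objective. -/

import Mathlib

open Matrix

section Aux

open Finset

private lemma exchange_identity' {n : ℕ} (G : Matrix (Fin n) (Fin n) ℝ) (hsymm : G.IsSymm)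
    (hdiag : ∀ i, G i i = 0)
    (x : Fin n → ℝ) (i j : Fin n) (hij : i ≠ j) (hGij : G i j = 0) :
    ∑ k, ∑ l, G k l * (x k + x j * ((if k = i then (1:ℝ) else 0) - (if k = j then 1 else 0)))
      * (x l + x j * ((if l = i then (1:ℝ) else 0) - (if l = j then 1 else 0)))
    = (∑ k, ∑ l, G k l * x k * x l)
      + 2 * x j * ((∑ l, G i l * x l) - (∑ l, G j l * x l)) := by
  have hGji : G j i = 0 := by rw [← hsymm.apply]; exact hGij
  have hsym : ∀ k l, G l k = G k l := fun k l => by rw [← hsymm.apply]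
  have expand : ∀ k l : Fin n,
      G k l * (x k + x j * ((if k = i then (1:ℝ) else 0) - (if k = j then 1 else 0)))
      * (x l + x j * ((if l = i then (1:ℝ) else 0) - (if l = j then 1 else 0)))
      = G k l * x k * x l
        + x j * (x k * ((if l = i then G k l else 0) - (if l = j then G k l else 0)))
        + x j * (x l * ((if k = i then G k l else 0) - (if k = j then G k l else 0)))
        + x j^2 * (((if k = i then (1:ℝ) else 0) - if k = j then 1 else 0)
            * (((if l = i then G k l else 0) - if l = j then G k l else 0))) := by
    intro k l
    by_cases h1 : k = i <;> by_cases h2 : k = j <;> by_cases h3 : l = i <;> by_cases h4 : l = j <;>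
      simp_all <;> ring
  rw [Finset.sum_congr rfl fun k _ => Finset.sum_congr rfl fun l _ => expand k l]
  simp only [Finset.sum_add_distrib, mul_sub, Finset.sum_sub_distrib, ← Finset.mul_sum,
    Finset.sum_ite_eq, Finset.mem_univ, if_true]
  simp only [sub_mul, ite_mul, zero_mul, one_mul, Finset.sum_sub_distrib, Finset.sum_ite_eq,
    Finset.sum_ite_eq', Finset.mem_univ, if_true, hdiag, hGij, hGji]
  have pull : ∀ c : Fin n, (∑ x1 : Fin n, ∑ x2 : Fin n, x x2 * if x1 = c then G x1 x2 else 0)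
      = ∑ k, G c k * x k := by
    intro c
    rw [Finset.sum_eq_single c]
    · exact Finset.sum_congr rfl fun k _ => by simp [mul_comm]
    · intro b _ hb; simp [hb]
    · simp
  have flip : ∀ c : Fin n, ∑ k : Fin n, x k * G k c = ∑ k : Fin n, G c k * x k :=
    fun c => Finset.sum_congr rfl fun k _ => by rw [hsym c k]; ring
  rw [pull i, pull j, flip i, flip j]
  ring

/-- Motzkin–Straus type bound: for a 0/1 symmetric matrix with zero diagonal whose
cliques all have size at most `ω`, the quadratic form on nonnegative vectors is at most
`(1 - 1/ω)` times the square of the sum. -/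
private lemma motzkin_straus' {n : ℕ} (G : Matrix (Fin n) (Fin n) ℝ) (hsymm : G.IsSymm)
    (hdiag : ∀ i, G i i = 0)
    (ω : ℕ) (hω : 1 ≤ ω)
    (hmax : ∀ K' : Finset (Fin n), (∀ i ∈ K', ∀ j ∈ K', i ≠ j → G i j = 1) → K'.card ≤ ω)
    (h01 : ∀ i j, G i j = 0 ∨ G i j = 1)
    (x : Fin n → ℝ) (hx : ∀ i, 0 ≤ x i) :
    ∑ i, ∑ j, G i j * x i * x j ≤ (1 - 1/(ω:ℝ)) * (∑ i, x i)^2 := by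
  suffices H : ∀ m : ℕ, ∀ x : Fin n → ℝ, (∀ i, 0 ≤ x i) →
      (Finset.univ.filter fun i => x i ≠ 0).card ≤ m →
      ∑ i, ∑ j, G i j * x i * x j ≤ (1 - 1/(ω:ℝ)) * (∑ i, x i)^2 by
    exact H _ x hx le_rfl
  intro m
  induction m with
  | zero =>
    intro x hx hcard
    have hzero : ∀ i, x i = 0 := by
      intro i
      by_contra h
      have hmem : i ∈ Finset.univ.filter fun i => x i ≠ 0 := by simp [h]
      have := Finset.card_pos.mpr ⟨i, hmem⟩
      omega
    simp [hzero]
  | succ m ih =>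
    intro x hx hcard
    set S := Finset.univ.filter fun i => x i ≠ 0 with hS
    by_cases hcl : ∀ i ∈ S, ∀ j ∈ S, i ≠ j → G i j = 1
    · -- support is a clique
      have hcardS : (S.card : ℝ) ≤ (ω : ℝ) := by exact_mod_cast hmax S hcl
      have key : ∀ i j, G i j * x i * x j = x i * x j - (if i = j then x i * x j else 0) := by
        intro i j
        by_cases h : i = j
        · subst h; simp [hdiag]
        · simp only [if_neg h]
          by_cases hxi : x i = 0
          · simp [hxi]
          · by_cases hxj : x j = 0
            · simp [hxj]
            · rw [hcl i (by simp [hS, hxi]) j (by simp [hS, hxj]) h]; ring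
      have hQ : ∑ i, ∑ j, G i j * x i * x j = (∑ i, x i)^2 - ∑ i, x i^2 := by
        simp only [key]
        rw [Finset.sum_congr rfl (fun i _ => Finset.sum_sub_distrib _ _), Finset.sum_sub_distrib]
        congr 1
        · rw [sq, Finset.sum_mul_sum]
        · exact Finset.sum_congr rfl fun i _ =>
            by rw [Finset.sum_ite_eq univ i (fun j => x i * x j)]; simp [sq]
      have hAS : ∑ i, x i = ∑ i ∈ S, x i := by
        rw [hS]; exact (Finset.sum_filter_ne_zero _).symm
      have hsqS : ∑ i, x i^2 = ∑ i ∈ S, x i^2 := by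
        refine (Finset.sum_subset (Finset.subset_univ S) ?_).symm
        intro i _ hi
        have : x i = 0 := by by_contra h; exact hi (by simp [hS, h])
        simp [this]
      have hCS : (∑ i ∈ S, x i)^2 ≤ (S.card : ℝ) * ∑ i ∈ S, x i^2 :=
        sq_sum_le_card_mul_sum_sq
      have hsum_sq_nonneg : (0:ℝ) ≤ ∑ i ∈ S, x i^2 :=
        Finset.sum_nonneg fun i _ => sq_nonneg _
      have h1 : (∑ i, x i)^2 ≤ (ω:ℝ) * ∑ i, x i^2 := by
        rw [hAS, hsqS]
        exact hCS.trans (mul_le_mul_of_nonneg_right hcardS hsum_sq_nonneg)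
      have hω0 : (0:ℝ) < (ω:ℝ) := by exact_mod_cast hω
      rw [hQ]
      have h2 : (1/(ω:ℝ)) * ((ω:ℝ) * ∑ i, x i^2) = ∑ i, x i^2 := by field_simp
      nlinarith [mul_le_mul_of_nonneg_left h1 (le_of_lt (one_div_pos.mpr hω0))]
    · -- support is not a clique: exchange argument
      push_neg at hcl
      obtain ⟨i, hiS, j, hjS, hij, hGij1⟩ := hcl
      have key : ∀ i j : Fin n, i ∈ S → j ∈ S → i ≠ j → G i j = 0 →
          (∑ l, G j l * x l) ≤ (∑ l, G i l * x l) →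
          ∑ k, ∑ l, G k l * x k * x l ≤ (1 - 1/(ω:ℝ)) * (∑ k, x k)^2 := by
        intro i j hiS hjS hij hGij hble
        set y : Fin n → ℝ := fun k =>
          x k + x j * ((if k = i then (1:ℝ) else 0) - (if k = j then 1 else 0)) with hy
        have hxj0 : 0 < x j := by
          have : x j ≠ 0 := by simpa [hS] using hjS
          exact lt_of_le_of_ne (hx j) (Ne.symm this)
        have hxi0 : x i ≠ 0 := by simpa [hS] using hiS
        have hyk : ∀ k, y k = if k = j then 0 else if k = i then x i + x j else x k := by
          intro k
          by_cases h1 : k = j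
          · subst h1; simp [hy, hij, Ne.symm hij]
          · by_cases h2 : k = i
            · subst h2; simp [hy, hij]
            · simp [hy, h1, h2]
        have hynn : ∀ k, 0 ≤ y k := by
          intro k; rw [hyk]
          by_cases h1 : k = j
          · simp [h1]
          · rw [if_neg h1]
            by_cases h2 : k = i
            · subst h2; rw [if_pos rfl]; exact add_nonneg (hx k) hxj0.le
            · rw [if_neg h2]; exact hx k
        have hsupp : (Finset.univ.filter fun k => y k ≠ 0) ⊆ S.erase j := by
          intro k hk
          simp only [Finset.mem_filter, Finset.mem_univ, true_and] at hk
          rw [hyk] at hk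
          by_cases h1 : k = j
          · simp [h1] at hk
          · rw [if_neg h1] at hk
            refine Finset.mem_erase.mpr ⟨h1, ?_⟩
            by_cases h2 : k = i
            · subst h2; exact hiS
            · rw [if_neg h2] at hk; simp [hS, hk]
        have hcardy : (Finset.univ.filter fun k => y k ≠ 0).card ≤ m := by
          have h1 := Finset.card_le_card hsupp
          have h2 : (S.erase j).card = S.card - 1 := Finset.card_erase_of_mem hjS
          have h3 : 1 ≤ S.card := Finset.card_pos.mpr ⟨j, hjS⟩
          omega
        have hsumy : ∑ k, y k = ∑ k, x k := by
          simp only [hy, Finset.sum_add_distrib, mul_sub, Finset.sum_sub_distrib,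
            ← Finset.mul_sum, mul_ite, mul_one, mul_zero, Finset.sum_ite_eq,
            Finset.sum_ite_eq', Finset.mem_univ, if_true]
          ring
        have hQy := exchange_identity' G hsymm hdiag x i j hij hGij
        have hihy := ih y hynn hcardy
        rw [hsumy] at hihy
        have : ∑ k, ∑ l, G k l * x k * x l ≤ ∑ k, ∑ l, G k l * y k * y l := by
          simp only [hy] at hQy ⊢
          rw [hQy]
          nlinarith
        exact this.trans hihy
      have hGij : G i j = 0 := (h01 i j).resolve_right hGij1
      have hGji : G j i = 0 := by rw [← hsymm.apply]; exact hGij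
      rcases le_total (∑ l, G j l * x l) (∑ l, G i l * x l) with h | h
      · exact key i j hiS hjS hij hGij h
      · exact key j i hjS hiS (Ne.symm hij) hGji h

end Aux

/-- The equilibrium conditions: `a` is nonnegative, solves
`(I − P'(Y)·β·diag(σ)·G)·a = P'(Y)·σ`, and `Y = Y(a)`. -/
def eqmCond {n : ℕ} (G : Matrix (Fin n) (Fin n) ℝ) (β : ℝ) (P : ℝ → ℝ)
    (σ a : Fin n → ℝ) (Y : ℝ) : Prop :=
  (∀ i, 0 ≤ a i) ∧
  ((1 : Matrix (Fin n) (Fin n) ℝ)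
      - (deriv P Y * β) • (Matrix.diagonal σ * G)).mulVec a = deriv P Y • σ ∧
  Y = ∑ i, a i + β / 2 * ∑ i, ∑ j, G i j * a i * a j

private lemma eqm_unpack' {n : ℕ} (G : Matrix (Fin n) (Fin n) ℝ) (β : ℝ) (P : ℝ → ℝ)
    (σ a : Fin n → ℝ) (Y : ℝ) (h : eqmCond G β P σ a Y) (i : Fin n) :
    a i = deriv P Y * σ i + deriv P Y * β * σ i * (G.mulVec a i) := by
  have h2 := congrFun h.2.1 i
  simp only [Matrix.sub_mulVec, Matrix.one_mulVec, Matrix.smul_mulVec,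
    ← Matrix.mulVec_mulVec, Matrix.mulVec_diagonal, Pi.smul_apply, smul_eq_mul,
    Pi.sub_apply] at h2
  linear_combination h2


private lemma arith1' (A lam β c Q : ℝ) (hCS : A^2 ≤ lam*(A + β*Q))
    (hb1 : lam*β*Q ≤ lam*β*(c*A^2)) : A * (A * (1 - lam*β*c)) ≤ A * lam := by nlinarith

private lemma arith2' (A lam lam0 β c : ℝ) (key : A*(1 - lam*β*c) ≤ lam)
    (hm2 : A*(lam*(β*c)) ≤ A*(lam0*(β*c))) (hlamle : lam ≤ lam0) :
    A*(1 - lam0*β*c) ≤ lam0 := by nlinarith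

private lemma arith3' (A lam0 β c T : ℝ) (h6 : A*(1 - lam0*β*c) ≤ lam0)
    (hTeq : T = lam0 + lam0*β*c*T) : A*(1 - lam0*β*c) ≤ T*(1 - lam0*β*c) := by nlinarith

set_option maxHeartbeats 2000000 in
/-- on an unweighted network, dividing all equity equally within a maximum
clique `K` of size `ω ≥ 2` satisfies balanced neighborhood equity with constant
`(ω−1)/ω` on `K`, and is optimal for the success probability objective. -/
theorem statement_11 {n : ℕ} (G : Matrix (Fin n) (Fin n) ℝ)
    (hG_symm : G.IsSymm)
    (hG_01 : ∀ i j, G i j = 0 ∨ G i j = 1)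
    (hG_diag : ∀ i, G i i = 0)
    (hG_ne : G ≠ 0)
    (β : ℝ) (hβ : 0 < β)
    (P : ℝ → ℝ)
    (hP_mono : StrictMonoOn P (Set.Ici (0:ℝ)))
    (hP_conc : ConcaveOn ℝ (Set.Ici (0:ℝ)) P)
    (hP_range : ∀ y : ℝ, 0 ≤ y → P y ∈ Set.Ico (0:ℝ) 1)
    (hP_diff : ∀ y : ℝ, 0 ≤ y → DifferentiableAt ℝ P y)
    (hP_diff2 : ∀ y : ℝ, 0 ≤ y → DifferentiableAt ℝ (deriv P) y)
    (astar : (Fin n → ℝ) → Fin n → ℝ) (Ystar : (Fin n → ℝ) → ℝ)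
    (heqm : ∀ σ : Fin n → ℝ, (∀ i, 0 ≤ σ i) → eqmCond G β P σ (astar σ) (Ystar σ))
    (K : Finset (Fin n))
    (hK_clique : ∀ i ∈ K, ∀ j ∈ K, i ≠ j → G i j = 1)
    (hK_max : ∀ K' : Finset (Fin n),
      (∀ i ∈ K', ∀ j ∈ K', i ≠ j → G i j = 1) → K'.card ≤ K.card)
    (hK_card : 2 ≤ K.card)
    (σstar : Fin n → ℝ)
    (hσstar : ∀ i, σstar i = if i ∈ K then ((K.card : ℝ))⁻¹ else 0) :
    (∀ i ∈ K, G.mulVec σstar i = ((K.card : ℝ) - 1) / (K.card : ℝ)) ∧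
    (∀ σ : Fin n → ℝ, (∀ i, 0 ≤ σ i) → ∑ i, σ i ≤ 1 →
      P (Ystar σ) ≤ P (Ystar σstar)) := by
  have hw2 : (2:ℝ) ≤ (K.card : ℝ) := by exact_mod_cast hK_card
  set w : ℝ := (K.card : ℝ) with hwdef
  have hw0 : 0 < w := by linarith
  have hwne : w ≠ 0 := ne_of_gt hw0
  have hGnn : ∀ i j, 0 ≤ G i j := by
    intro i j; rcases hG_01 i j with h | h <;> rw [h] <;> norm_num
  -- sum of G i j over K, for i ∈ K
  have hrowsum : ∀ i ∈ K, ∑ j ∈ K, G i j = w - 1 := by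
    intro i hi
    have key : ∀ j ∈ K, G i j = 1 - (if j = i then (1:ℝ) else 0) := by
      intro j hj
      by_cases h : j = i
      · subst h; simp [hG_diag]
      · rw [hK_clique i hi j hj (fun e => h e.symm)]; simp [h]
    rw [Finset.sum_congr rfl key, Finset.sum_sub_distrib, Finset.sum_const,
      Finset.sum_ite_eq' K i (fun _ => (1:ℝ)), if_pos hi]
    simp [hwdef]
  -- Part 1
  have part1 : ∀ i ∈ K, G.mulVec σstar i = (w - 1) / w := by
    intro i hi
    have : G.mulVec σstar i = ∑ j, G i j * σstar j := rfl
    rw [this]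
    have : ∀ j : Fin n, G i j * σstar j = if j ∈ K then G i j * w⁻¹ else 0 := by
      intro j; rw [hσstar j]; split <;> simp
    rw [Finset.sum_congr rfl fun j _ => this j, Finset.sum_ite_mem, Finset.univ_inter,
      ← Finset.sum_mul, hrowsum i hi]
    rw [div_eq_mul_inv]
  -- basic facts about σstar
  have hσsnn : ∀ i, 0 ≤ σstar i := by
    intro i; rw [hσstar i]; split
    · positivity
    · exact le_rfl
  have hσssum : ∑ i, σstar i = 1 := by
    have : ∀ i : Fin n, σstar i = if i ∈ K then w⁻¹ else 0 := hσstar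
    rw [Finset.sum_congr rfl fun i _ => this i, Finset.sum_ite_mem, Finset.univ_inter,
      Finset.sum_const, nsmul_eq_mul, ← hwdef]
    exact mul_inv_cancel₀ hwne
  -- general equilibrium facts
  have hfacts : ∀ σ : Fin n → ℝ, (∀ i, 0 ≤ σ i) →
      (∀ i, 0 ≤ G.mulVec (astar σ) i) ∧ (0 ≤ Ystar σ) ∧ (0 < deriv P (Ystar σ)) ∧
      (Ystar σ = (∑ i, astar σ i)
        + β/2 * ∑ i, astar σ i * G.mulVec (astar σ) i) ∧
      (∑ i, ∑ j, G i j * astar σ i * astar σ j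
        = ∑ i, astar σ i * G.mulVec (astar σ) i) := by
    intro σ hσ
    obtain ⟨hann, hlin, hYeq⟩ := heqm σ hσ
    have hbnn : ∀ i, 0 ≤ G.mulVec (astar σ) i := by
      intro i
      have : G.mulVec (astar σ) i = ∑ j, G i j * astar σ j := rfl
      rw [this]
      exact Finset.sum_nonneg fun j _ => mul_nonneg (hGnn i j) (hann j)
    have hQr : ∑ i, ∑ j, G i j * astar σ i * astar σ j
        = ∑ i, astar σ i * G.mulVec (astar σ) i := by
      refine Finset.sum_congr rfl fun i _ => ?_
      have : astar σ i * G.mulVec (astar σ) i = ∑ j, astar σ i * (G i j * astar σ j) := by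
        rw [← Finset.mul_sum]; rfl
      rw [this]
      exact Finset.sum_congr rfl fun j _ => by ring
    have hYnn : 0 ≤ Ystar σ := by
      rw [hYeq]
      have h1 : 0 ≤ ∑ i, astar σ i := Finset.sum_nonneg fun i _ => hann i
      have h2 : 0 ≤ ∑ i, ∑ j, G i j * astar σ i * astar σ j :=
        Finset.sum_nonneg fun i _ => Finset.sum_nonneg fun j _ =>
          mul_nonneg (mul_nonneg (hGnn i j) (hann i)) (hann j)
      positivity
    have hlampos : 0 < deriv P (Ystar σ) := by
      have hmem1 : Ystar σ ∈ Set.Ici (0:ℝ) := hYnn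
      have hmem2 : Ystar σ + 1 ∈ Set.Ici (0:ℝ) := by
        simp only [Set.mem_Ici] at hmem1 ⊢; linarith
      have hslope := hP_conc.slope_le_deriv hmem1 hmem2 (lt_add_one _)
        (hP_diff _ hYnn)
      have hval : P (Ystar σ) < P (Ystar σ + 1) :=
        hP_mono hmem1 hmem2 (lt_add_one _)
      rw [slope_def_field] at hslope
      have : Ystar σ + 1 - Ystar σ = 1 := by ring
      rw [this, div_one] at hslope
      linarith
    refine ⟨hbnn, hYnn, hlampos, ?_, hQr⟩
    rw [hYeq, hQr]
  -- clique equilibrium analysis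
  obtain ⟨hbnn0, hY0nn, hlam0pos, hY0eq, hQr0⟩ := hfacts σstar hσsnn
  set a0 : Fin n → ℝ := astar σstar with ha0def
  set Y0 : ℝ := Ystar σstar with hY0def
  set lam0 : ℝ := deriv P Y0 with hlam0def
  have heq0 := heqm σstar hσsnn
  have ha0nn : ∀ i, 0 ≤ a0 i := heq0.1
  have hzero0 : ∀ i ∉ K, a0 i = 0 := by
    intro i hi
    have := eqm_unpack' G β P σstar a0 Y0 heq0 i
    rw [hσstar i, if_neg hi] at this
    simpa using this
  set T : ℝ := ∑ i ∈ K, a0 i with hTdef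
  have hTnn : 0 ≤ T := Finset.sum_nonneg fun i _ => ha0nn i
  have hsumT : ∑ i, a0 i = T := by
    rw [hTdef]
    exact (Finset.sum_subset (Finset.subset_univ K) fun i _ hi => hzero0 i hi).symm
  have hb0 : ∀ i ∈ K, G.mulVec a0 i = T - a0 i := by
    intro i hi
    have h1 : G.mulVec a0 i = ∑ j, G i j * a0 j := rfl
    have h2 : ∑ j, G i j * a0 j = ∑ j ∈ K, G i j * a0 j :=
      (Finset.sum_subset (Finset.subset_univ K)
        fun j _ hj => by rw [hzero0 j hj, mul_zero]).symm
    have key : ∀ j ∈ K, G i j * a0 j = a0 j - (if j = i then a0 j else 0) := by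
      intro j hj
      by_cases h : j = i
      · subst h; simp [hG_diag]
      · rw [hK_clique i hi j hj (fun e => h e.symm)]; simp [h]
    rw [h1, h2, Finset.sum_congr rfl key, Finset.sum_sub_distrib,
      Finset.sum_ite_eq' K i (fun j => a0 j), if_pos hi, ← hTdef]
  have heqK : ∀ i ∈ K, a0 i = lam0 * w⁻¹ + lam0 * β * w⁻¹ * (T - a0 i) := by
    intro i hi
    have h := eqm_unpack' G β P σstar a0 Y0 heq0 i
    rw [hσstar i, if_pos hi, hb0 i hi] at h
    exact h
  set c : ℝ := 1 - 1/w with hcdef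
  have hc0 : 0 ≤ c := by
    rw [hcdef]
    have : 1/w ≤ 1 := by rw [div_le_one hw0]; linarith
    linarith
  have hTeq : T = lam0 + lam0 * β * c * T := by
    have h1 : T = ∑ i ∈ K, (lam0 * w⁻¹ + lam0 * β * w⁻¹ * (T - a0 i)) := by
      conv_lhs => rw [hTdef]
      exact Finset.sum_congr rfl heqK
    rw [Finset.sum_add_distrib, Finset.sum_const] at h1
    have h2 : ∑ i ∈ K, lam0 * β * w⁻¹ * (T - a0 i) = lam0 * β * w⁻¹ * (w * T - T) := by
      rw [← Finset.mul_sum, Finset.sum_sub_distrib, Finset.sum_const, ← hTdef,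
        nsmul_eq_mul, ← hwdef]
    rw [h2, nsmul_eq_mul, ← hwdef] at h1
    have e1 : w * (lam0 * w⁻¹) = lam0 := by field_simp
    have e2 : lam0 * β * w⁻¹ * (w * T - T) = lam0 * β * c * T := by
      rw [hcdef]; field_simp
    rw [e1, e2] at h1
    exact h1
  have hd0 : lam0 * β * c < 1 := by
    by_contra h
    push_neg at h
    have := mul_le_mul_of_nonneg_right h hTnn
    rw [one_mul] at this
    linarith
  have hTpos : 0 < T := by
    have : 0 ≤ lam0 * β * c * T :=
      mul_nonneg (mul_nonneg (mul_nonneg hlam0pos.le hβ.le) hc0) hTnn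
    linarith
  have hdenpos : 0 < 1 + lam0 * β * w⁻¹ := by
    have : 0 ≤ lam0 * β * w⁻¹ :=
      mul_nonneg (mul_nonneg hlam0pos.le hβ.le) (inv_nonneg.mpr hw0.le)
    linarith
  have hshare : ∀ i ∈ K, a0 i = T * w⁻¹ := by
    set r : ℝ := lam0 * w⁻¹ * (1 + β * T) / (1 + lam0 * β * w⁻¹) with hrdef
    have hall : ∀ i ∈ K, a0 i = r := by
      intro i hi
      rw [hrdef, eq_div_iff hdenpos.ne']
      linear_combination heqK i hi
    have hTr : T = w * r := by
      conv_lhs => rw [hTdef]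
      rw [Finset.sum_congr rfl hall, Finset.sum_const, nsmul_eq_mul, ← hwdef]
    intro i hi
    rw [hall i hi, hTr]
    field_simp
  have hQ0 : ∑ i, a0 i * G.mulVec a0 i = c * T^2 := by
    have h2 : ∑ i, a0 i * G.mulVec a0 i = ∑ i ∈ K, a0 i * G.mulVec a0 i :=
      (Finset.sum_subset (Finset.subset_univ K)
        fun i _ hi => by rw [hzero0 i hi, zero_mul]).symm
    have key : ∀ i ∈ K, a0 i * G.mulVec a0 i = T * w⁻¹ * (T - T * w⁻¹) := by
      intro i hi
      rw [hb0 i hi, hshare i hi]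
    rw [h2, Finset.sum_congr rfl key, Finset.sum_const, nsmul_eq_mul, ← hwdef, hcdef]
    field_simp
  have hY0v : Y0 = T + β/2 * (c * T^2) := by
    rw [hY0eq, hsumT, hQ0]
  -- Part 2
  refine ⟨part1, ?_⟩
  intro σ hσ hsum
  obtain ⟨hbnn, hYnn, hlampos, hYv, hQrs⟩ := hfacts σ hσ
  have hann : ∀ i, 0 ≤ astar σ i := (heqm σ hσ).1
  set a : Fin n → ℝ := astar σ with hadef
  set Y : ℝ := Ystar σ with hYdef
  set lam : ℝ := deriv P Y with hlamdef
  suffices hYle : Y ≤ Y0 by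
    rcases eq_or_lt_of_le hYle with he | hl
    · rw [he]
    · exact (hP_mono hYnn hY0nn hl).le
  by_contra hcon
  push_neg at hcon
  have hlamle : lam ≤ lam0 :=
    (hP_conc.antitoneOn_deriv (fun x hx => hP_diff x hx))
      (Set.mem_Ici.mpr hY0nn) (Set.mem_Ici.mpr hYnn) hcon.le
  obtain ⟨A, hAdef⟩ : ∃ A : ℝ, ∑ i, a i = A := ⟨_, rfl⟩
  obtain ⟨Q, hQdef⟩ : ∃ Q : ℝ, ∑ i, a i * G.mulVec a i = Q := ⟨_, rfl⟩
  rw [hAdef, hQdef] at hYv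
  rw [hQdef] at hQrs
  have hAnn : 0 ≤ A := hAdef ▸ Finset.sum_nonneg fun i _ => hann i
  have hQnn : 0 ≤ Q := hQdef ▸ Finset.sum_nonneg fun i _ => mul_nonneg (hann i) (hbnn i)
  -- Motzkin–Straus bound
  have hMS : Q ≤ c * A^2 := by
    have h := motzkin_straus' G hG_symm hG_diag K.card (by omega) hK_max hG_01 a hann
    rw [hQrs] at h
    rw [← hwdef, ← hcdef, hAdef] at h
    exact h
  -- Cauchy–Schwarz budget bound
  have hai : ∀ i, a i = lam * σ i * (1 + β * G.mulVec a i) := by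
    intro i
    have h := eqm_unpack' G β P σ a Y (heqm σ hσ) i
    linear_combination h
  have hCS : A^2 ≤ lam * (A + β * Q) := by
    set u : Fin n → ℝ := fun i => Real.sqrt (lam * σ i) with hudef
    set v : Fin n → ℝ := fun i => Real.sqrt (lam * σ i) * (1 + β * G.mulVec a i) with hvdef
    have hnn : ∀ i, 0 ≤ lam * σ i := fun i => mul_nonneg hlampos.le (hσ i)
    have huv : ∀ i, a i = u i * v i := by
      intro i
      rw [hudef, hvdef]
      simp only
      rw [← mul_assoc, Real.mul_self_sqrt (hnn i)]
      exact hai i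
    have hu2 : ∑ i, (u i)^2 = lam * ∑ i, σ i := by
      rw [Finset.mul_sum]
      exact Finset.sum_congr rfl fun i _ => by
        rw [hudef]; simp only; rw [Real.sq_sqrt (hnn i)]
    have hv2 : ∑ i, (v i)^2 = A + β * Q := by
      have key : ∀ i, (v i)^2 = a i + β * (a i * G.mulVec a i) := by
        intro i
        have h1 : (v i)^2 = lam * σ i * (1 + β * G.mulVec a i)^2 := by
          rw [hvdef]; simp only; rw [mul_pow, Real.sq_sqrt (hnn i)]
        rw [h1, hai i]
        ring
      rw [Finset.sum_congr rfl fun i _ => key i, Finset.sum_add_distrib, ← Finset.mul_sum,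
        hAdef, hQdef]
    have hcs := Finset.sum_mul_sq_le_sq_mul_sq Finset.univ u v
    have hAuv : ∑ i, u i * v i = A := by
      rw [← hAdef]
      exact Finset.sum_congr rfl fun i _ => (huv i).symm
    rw [hAuv, hu2, hv2] at hcs
    have h1 : lam * ∑ i, σ i ≤ lam := by
      have := mul_le_mul_of_nonneg_left hsum hlampos.le
      simpa using this
    have h2 : 0 ≤ A + β * Q := by positivity
    calc A^2 ≤ (lam * ∑ i, σ i) * (A + β * Q) := hcs
    _ ≤ lam * (A + β * Q) := mul_le_mul_of_nonneg_right h1 h2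
  -- conclude A ≤ T
  have hAT : A ≤ T := by
    rcases eq_or_lt_of_le hAnn with h0 | hApos
    · linarith
    · have hb1 : lam * β * Q ≤ lam * β * (c * A^2) :=
        mul_le_mul_of_nonneg_left hMS (mul_nonneg hlampos.le hβ.le)
      have h2 : A * (A * (1 - lam * β * c)) ≤ A * lam := arith1' A lam β c Q hCS hb1
      have key : A * (1 - lam * β * c) ≤ lam := le_of_mul_le_mul_left h2 hApos
      have hm : lam * (β * c) ≤ lam0 * (β * c) :=
        mul_le_mul_of_nonneg_right hlamle (mul_nonneg hβ.le hc0)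
      have hm2 : A * (lam * (β * c)) ≤ A * (lam0 * (β * c)) :=
        mul_le_mul_of_nonneg_left hm hAnn
      have h6 : A * (1 - lam0 * β * c) ≤ lam0 := arith2' A lam lam0 β c key hm2 hlamle
      have hpos : 0 < 1 - lam0 * β * c := by linarith
      have h7 : A * (1 - lam0 * β * c) ≤ T * (1 - lam0 * β * c) := arith3' A lam0 β c T h6 hTeq
      exact le_of_mul_le_mul_right h7 hpos
  -- conclude Y ≤ Y0, contradiction
  have hA2 : A^2 ≤ T^2 := pow_le_pow_left₀ hAnn hAT 2
  have h3 : c * A^2 ≤ c * T^2 := mul_le_mul_of_nonneg_left hA2 hc0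
  have h4 : β/2 * Q ≤ β/2 * (c * A^2) := mul_le_mul_of_nonneg_left hMS (by positivity)
  have h5 : β/2 * (c * A^2) ≤ β/2 * (c * T^2) := mul_le_mul_of_nonneg_left h3 (by positivity)
  have : Y ≤ Y0 := by
    rw [hYv, hY0v]
    linarith
  linarith
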